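/- Let (Ω, F) be a measurable space, let P and Q be probability measures on (Ω, F), let 0 < δ < 1, and let E ∈ F be an event with P(E) ≥ 1 − δ and Q(E) < 1 − δ. If the Kullback–Leibler divergence D(P‖Q) is finite, then Q(E) ≥ B(δ) · exp(−D(P‖Q)/(1 − δ)), where B(δ) := exp(−(−δ ln δ − (1 − δ) ln(1 − δ))/(1 − δ)). -/

import Mathlib

open MeasureTheory Real

lemma key_partition {Ω : Type*} [MeasurableSpace Ω] (P Q : Measure Ω)
    [IsProbabilityMeasure P] [IsProbabilityMeasure Q]
    (hac : P ≪ Q) (hint : Integrable (llr P Q) P)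
    {A : Set Ω} (hA : MeasurableSet A) :
    (P A).toReal * Real.log ((P A).toReal / (Q A).toReal) ≤ ∫ x in A, llr P Q x ∂P := by
  by_cases hPA : P A = 0
  · simp [hPA, Measure.restrict_eq_zero.mpr hPA]
  have hQA : Q A ≠ 0 := fun h => hPA (hac h)
  set p : ℝ := (P A).toReal with hp_def
  set q : ℝ := (Q A).toReal with hq_def
  have hp : 0 < p := ENNReal.toReal_pos hPA (measure_ne_top _ _)
  have hq : 0 < q := ENNReal.toReal_pos hQA (measure_ne_top _ _)
  set g : Ω → ℝ := fun x => ((P.rnDeriv Q x)⁻¹).toReal with hg_def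
  have hmeas : Measurable fun x => (P.rnDeriv Q x)⁻¹ := (Measure.measurable_rnDeriv P Q).inv
  have hlint : ∫⁻ x in A, (P.rnDeriv Q x)⁻¹ ∂P ≤ Q A := by
    have hPr : P.restrict A = (Q.restrict A).withDensity (P.rnDeriv Q) := by
      rw [← restrict_withDensity hA, Measure.withDensity_rnDeriv_eq P Q hac]
    rw [hPr, lintegral_withDensity_eq_lintegral_mul _ (Measure.measurable_rnDeriv P Q) hmeas]
    calc ∫⁻ x in A, (P.rnDeriv Q * fun x => (P.rnDeriv Q x)⁻¹) x ∂Q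
        ≤ ∫⁻ _ in A, 1 ∂Q := lintegral_mono fun x => ENNReal.mul_inv_le_one _
      _ = Q A := by simp
  have hlint' : ∫⁻ x in A, (P.rnDeriv Q x)⁻¹ ∂P ≠ ⊤ :=
    (hlint.trans_lt (measure_lt_top _ _)).ne
  have hg_int : Integrable g (P.restrict A) :=
    integrable_toReal_of_lintegral_ne_top hmeas.aemeasurable hlint'
  have hpos : ∀ᵐ x ∂(P.restrict A), 0 < P.rnDeriv Q x :=
    ae_restrict_of_ae (Measure.rnDeriv_pos hac)
  have hlt : ∀ᵐ x ∂(P.restrict A), P.rnDeriv Q x < ⊤ :=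
    ae_restrict_of_ae (hac.ae_le (Measure.rnDeriv_lt_top P Q))
  have hg_le : ∫ x in A, g x ∂P ≤ q := by
    rw [hg_def, integral_toReal hmeas.aemeasurable
      (hpos.mono fun x hx => ENNReal.inv_lt_top.mpr hx)]
    exact ENNReal.toReal_mono (measure_ne_top _ _) hlint
  have hptwise : ∀ᵐ x ∂(P.restrict A),
      Real.log (p / q) - llr P Q x ≤ (p / q) * g x - 1 := by
    filter_upwards [hpos, hlt] with x hx0 hxt
    have ht : 0 < (P.rnDeriv Q x).toReal := ENNReal.toReal_pos hx0.ne' hxt.ne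
    have hcq : 0 < p / q := div_pos hp hq
    have h1 : Real.log (p / q) - llr P Q x = Real.log ((p / q) / (P.rnDeriv Q x).toReal) := by
      rw [Real.log_div hcq.ne' ht.ne', llr]
    rw [h1]
    have := Real.log_le_sub_one_of_pos (div_pos hcq ht)
    have hg_eq : g x = ((P.rnDeriv Q x).toReal)⁻¹ := ENNReal.toReal_inv _
    rw [hg_eq]
    calc Real.log ((p / q) / (P.rnDeriv Q x).toReal) ≤ (p / q) / (P.rnDeriv Q x).toReal - 1 := this
      _ = (p / q) * ((P.rnDeriv Q x).toReal)⁻¹ - 1 := by rw [div_eq_mul_inv]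
  have hint' : Integrable (fun x => Real.log (p / q) - llr P Q x) (P.restrict A) :=
    (integrable_const _).sub hint.restrict
  have hint'' : Integrable (fun x => (p / q) * g x - 1) (P.restrict A) :=
    (hg_int.const_mul _).sub (integrable_const 1)
  have hI := integral_mono_ae hint' hint'' hptwise
  rw [integral_sub (integrable_const _) hint.restrict,
    integral_sub (hg_int.const_mul _) (integrable_const 1)] at hI
  simp only [integral_const, Measure.restrict_apply MeasurableSet.univ, Set.univ_inter,
    smul_eq_mul, mul_one, integral_const_mul, measureReal_def] at hI
  have : (p / q) * ∫ x in A, g x ∂P ≤ (p / q) * q :=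
    mul_le_mul_of_nonneg_left hg_le (le_of_lt (div_pos hp hq))
  rw [div_mul_cancel₀ p hq.ne'] at this
  nlinarith [hI, this]

lemma F_mono {q δ : ℝ} (hδ0 : 0 < δ) (hδ1 : δ < 1) (hq0 : 0 < q) (hq : q < 1 - δ) :
    MonotoneOn (fun t => t * Real.log t + (1 - t) * Real.log (1 - t) - t * Real.log q)
      (Set.Icc (1 - δ) 1) := by
  apply monotoneOn_of_hasDerivWithinAt_nonneg (f' := fun t =>
      Real.log t - Real.log (1 - t) - Real.log q) (convex_Icc _ _)
  · exact ((Real.continuous_mul_log.add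
      (Real.continuous_mul_log.comp (continuous_const.sub continuous_id))).sub
      (continuous_id.mul continuous_const)).continuousOn
  · intro t ht
    rw [interior_Icc] at ht
    obtain ⟨ht0', ht1⟩ := ht
    have ht0 : 0 < t := lt_trans (by linarith) ht0'
    have h1t : 0 < 1 - t := by linarith
    have h1 : HasDerivAt (fun t : ℝ => t * Real.log t) (Real.log t + 1) t :=
      Real.hasDerivAt_mul_log ht0.ne'
    have h2 : HasDerivAt (fun t : ℝ => 1 - t) (-1) t := (hasDerivAt_id t).const_sub 1
    have h3 : HasDerivAt (fun t : ℝ => (1 - t) * Real.log (1 - t))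
        ((Real.log (1 - t) + 1) * (-1)) t :=
      (Real.hasDerivAt_mul_log h1t.ne').comp t h2
    have h4 : HasDerivAt (fun t : ℝ => t * Real.log q) (Real.log q) t :=
      hasDerivAt_mul_const _
    have htot := (h1.add h3).sub h4
    have : Real.log t + 1 + (Real.log (1 - t) + 1) * (-1) - Real.log q
        = Real.log t - Real.log (1 - t) - Real.log q := by ring
    rw [this] at htot
    exact htot.hasDerivWithinAt
  · intro t ht
    rw [interior_Icc] at ht
    obtain ⟨ht0', ht1⟩ := ht
    have ht0 : 0 < t := lt_trans (by linarith) ht0'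
    have h1t : 0 < 1 - t := by linarith
    have hle : (1 - t) * q ≤ t := by nlinarith
    have := Real.log_le_log (by positivity) hle
    rw [Real.log_mul h1t.ne' hq0.ne'] at this
    linarith

/-- **Lemma (two-point inequality).** For probability measures `P, Q` on a measurable
space, an event `E` with `P(E) ≥ 1 - δ > Q(E)` (with `0 < δ < 1`), and finite
Kullback–Leibler divergence `D(P‖Q) = ∫ llr P Q dP` (here `P ≪ Q` and the
log-likelihood ratio is `P`-integrable), we have
`Q(E) ≥ B(δ) · exp(- D(P‖Q) / (1 - δ))` where
`B(δ) = exp(-(-δ ln δ - (1-δ) ln (1-δ)) / (1-δ))`. -/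
theorem stmt_0 {Ω : Type*} [MeasurableSpace Ω] (P Q : Measure Ω)
    [IsProbabilityMeasure P] [IsProbabilityMeasure Q]
    (δ : ℝ) (hδ0 : 0 < δ) (hδ1 : δ < 1)
    (E : Set Ω) (hE : MeasurableSet E)
    (hPE : (P E).toReal ≥ 1 - δ) (hQE : (Q E).toReal < 1 - δ)
    (hac : P ≪ Q) (hint : Integrable (llr P Q) P) :
    (Q E).toReal ≥
      Real.exp (-(-δ * Real.log δ - (1 - δ) * Real.log (1 - δ)) / (1 - δ)) *
        Real.exp (-(∫ x, llr P Q x ∂P) / (1 - δ)) := by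
  set D := ∫ x, llr P Q x ∂P with hD_def
  set p := (P E).toReal with hp_def
  set q := (Q E).toReal with hq_def
  have h1δ : 0 < 1 - δ := by linarith
  have hp0 : 0 < p := lt_of_lt_of_le h1δ hPE
  have hQne : Q E ≠ 0 := by
    intro h
    have : P E = 0 := hac h
    rw [hp_def, this] at hp0
    simp at hp0
  have hq0 : 0 < q := ENNReal.toReal_pos hQne (measure_ne_top _ _)
  have hp1 : p ≤ 1 := by
    simpa using ENNReal.toReal_mono ENNReal.one_ne_top (prob_le_one (μ := P) (s := E))
  have hq1 : q < 1 := by linarith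
  have h1q : 0 < 1 - q := by linarith
  have hPc : (P Eᶜ).toReal = 1 - p := by
    rw [hp_def, prob_compl_eq_one_sub hE,
      ENNReal.toReal_sub_of_le prob_le_one ENNReal.one_ne_top, ENNReal.toReal_one]
  have hQc : (Q Eᶜ).toReal = 1 - q := by
    rw [hq_def, prob_compl_eq_one_sub hE,
      ENNReal.toReal_sub_of_le prob_le_one ENNReal.one_ne_top, ENNReal.toReal_one]
  have hkeyE := key_partition P Q hac hint hE
  have hkeyEc := key_partition P Q hac hint hE.compl
  rw [hPc, hQc] at hkeyEc
  have hDge : p * Real.log (p / q) + (1 - p) * Real.log ((1 - p) / (1 - q)) ≤ D := by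
    rw [hD_def, ← integral_add_compl hE hint]
    exact add_le_add hkeyE hkeyEc
  have hlogE : p * Real.log (p / q) = p * Real.log p - p * Real.log q := by
    rw [Real.log_div hp0.ne' hq0.ne']; ring
  have hlogEc : (1 - p) * Real.log ((1 - p) / (1 - q))
      = (1 - p) * Real.log (1 - p) - (1 - p) * Real.log (1 - q) := by
    rcases eq_or_lt_of_le hp1 with h | h
    · rw [← h]; simp
    · rw [Real.log_div (by linarith : (0:ℝ) < 1 - p).ne' (by linarith : (0:ℝ) < 1 - q).ne']
      ring
  rw [hlogE, hlogEc] at hDge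
  have hF0 := F_mono hδ0 hδ1 hq0 hQE (Set.mem_Icc.mpr ⟨le_refl _, by linarith⟩)
    (Set.mem_Icc.mpr ⟨hPE, hp1⟩) hPE
  have hF : (1 - δ) * Real.log (1 - δ) + (1 - (1 - δ)) * Real.log (1 - (1 - δ))
      - (1 - δ) * Real.log q
      ≤ p * Real.log p + (1 - p) * Real.log (1 - p) - p * Real.log q := hF0
  have hδδ : 1 - (1 - δ) = δ := by ring
  rw [hδδ] at hF
  have h2 : (1 - p) * Real.log (1 - q) ≤ 0 :=
    mul_nonpos_of_nonneg_of_nonpos (by linarith) (Real.log_nonpos (by linarith) (by linarith))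
  have hmain : (1 - δ) * Real.log (1 - δ) + δ * Real.log δ - (1 - δ) * Real.log q ≤ D := by
    linarith
  rw [ge_iff_le, ← Real.exp_add]
  have hle : -(-δ * Real.log δ - (1 - δ) * Real.log (1 - δ)) / (1 - δ) + -D / (1 - δ)
      ≤ Real.log q := by
    rw [← add_div, div_le_iff₀ h1δ]
    nlinarith [hmain]
  calc Real.exp (-(-δ * Real.log δ - (1 - δ) * Real.log (1 - δ)) / (1 - δ) + -D / (1 - δ))
      ≤ Real.exp (Real.log q) := Real.exp_le_exp.mpr hle
    _ = q := Real.exp_log hq0
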